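/- Let C be a field, n and l non-negative integers with n ≥ 1, p a prime, and q = p^l. Let φ be the C-algebra endomorphism of the polynomial ring C[X_1, …, X_n] determined by φ(X_i) = X_i^{q} for each i. Then the induced map on prime spectra Spec(C[X_1, …, X_n]) → Spec(C[X_1, …, X_n]) is surjective; if moreover C has characteristic p, this map is a homeomorphism. -/

import Mathlib

open MvPolynomial

lemma ps_eq (C : Type*) [CommSemiring C] (n q : ℕ) :
    (MvPolynomial.aeval fun i : Fin n => MvPolynomial.X (R := C) i ^ q) = expand q := by
  apply MvPolynomial.algHom_ext
  intro i
  simp [expand_X]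

lemma expand_monomial' {σ R : Type*} [CommSemiring R] (q : ℕ) (d : σ →₀ ℕ) (a : R) :
    expand q (monomial d a) = monomial (q • d) a := by
  rw [expand_monomial, monomial_eq]

lemma coeff_expand_smul {σ R : Type*} [CommSemiring R] {q : ℕ} (hq : 0 < q)
    (f : MvPolynomial σ R) (d : σ →₀ ℕ) :
    (expand q f).coeff (q • d) = f.coeff d := by
  induction f using MvPolynomial.induction_on' with
  | monomial e a =>
      classical
      rw [expand_monomial', coeff_monomial, coeff_monomial]
      have hiff : q • e = q • d ↔ e = d := by
        constructor
        · intro hc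
          ext i
          have := DFunLike.congr_fun hc i
          simp only [Finsupp.smul_apply, smul_eq_mul] at this
          exact Nat.eq_of_mul_eq_mul_left hq this
        · rintro rfl; rfl
      by_cases h : e = d
      · simp [h, hiff]
      · rw [if_neg (fun hc => h (hiff.mp hc)), if_neg h]
  | add f g hf hg => simp [map_add, hf, hg]

lemma expand_injective' {σ R : Type*} [CommSemiring R] {q : ℕ} (hq : 0 < q) :
    Function.Injective (expand q : MvPolynomial σ R →ₐ[R] _) := by
  intro f g h
  ext d
  rw [← coeff_expand_smul hq f d, ← coeff_expand_smul hq g d, h]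

lemma expand_isIntegral {σ R : Type*} [CommRing R] {q : ℕ} (hq : 0 < q) :
    ((expand q : MvPolynomial σ R →ₐ[R] _).toRingHom).IsIntegral := by
  intro f
  induction f using MvPolynomial.induction_on with
  | C a =>
      have : (C a : MvPolynomial σ R) = (expand q).toRingHom (C a) := by simp [expand_C]
      rw [this]
      exact RingHom.isIntegralElem_map _
  | add f g hf hg => exact hf.add _ hg
  | mul_X f i hf =>
      refine hf.mul _ ⟨Polynomial.X ^ q - Polynomial.C (X i), ?_, ?_⟩
      · apply Polynomial.monic_X_pow_sub_C _ hq.ne'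
      · simp [Polynomial.eval₂_sub, Polynomial.eval₂_pow, expand_X]

lemma comap_expand_surjective {σ C : Type*} [Field C] {q : ℕ} (hq : 0 < q) :
    Function.Surjective
      (PrimeSpectrum.comap (expand q : MvPolynomial σ C →ₐ[C] _).toRingHom) := by
  intro P
  set f := (expand q : MvPolynomial σ C →ₐ[C] _).toRingHom with hf
  have hint : f.IsIntegral := expand_isIntegral hq
  letI alg : Algebra (MvPolynomial σ C) (MvPolynomial σ C) := f.toAlgebra
  haveI hAI : @Algebra.IsIntegral (MvPolynomial σ C) (MvPolynomial σ C) _ _ alg :=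
    @Algebra.IsIntegral.mk _ _ _ _ alg (fun x => hint x)
  have hker : Ideal.comap (@algebraMap _ _ _ _ alg) (⊥ : Ideal (MvPolynomial σ C)) ≤ P.asIdeal := by
    have : Ideal.comap f (⊥ : Ideal (MvPolynomial σ C)) = ⊥ :=
      Ideal.comap_bot_of_injective f (expand_injective' hq)
    show Ideal.comap f (⊥ : Ideal (MvPolynomial σ C)) ≤ P.asIdeal
    rw [this]
    exact bot_le
  obtain ⟨Q, -, hQ2, hQ3⟩ :=
    @Ideal.exists_ideal_over_prime_of_isIntegral _ _ _ _ alg hAI P.asIdeal P.isPrime ⊥ hker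
  exact ⟨⟨Q, hQ2⟩, PrimeSpectrum.ext hQ3⟩

section CharAux

variable {σ C : Type*} [CommRing C] (p l : ℕ) [Fact p.Prime] [CharP C p]

lemma map_frob_expand (f : MvPolynomial σ C) :
    map (iterateFrobenius C p l) (expand (p ^ l) f) = f ^ (p ^ l) := by
  induction f using MvPolynomial.induction_on with
  | C a => rw [expand_C, map_C, iterateFrobenius_def, ← C_pow]
  | add f g hf hg =>
      rw [map_add, map_add, hf, hg, add_pow_char_pow]
  | mul_X f i hf =>
      rw [map_mul, map_mul, expand_X, map_pow, map_X, hf, mul_pow]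

lemma expand_map_frob (f : MvPolynomial σ C) :
    expand (p ^ l) (map (iterateFrobenius C p l) f) = f ^ (p ^ l) := by
  rw [← map_expand, map_frob_expand p l f]

end CharAux

lemma comap_iterFrob (A : Type*) [CommRing A] (p l : ℕ) [Fact p.Prime] [CharP A p]
    (x : PrimeSpectrum A) :
    PrimeSpectrum.comap (iterateFrobenius A p l) x = x := by
  ext a
  show iterateFrobenius A p l a ∈ x.asIdeal ↔ a ∈ x.asIdeal
  rw [iterateFrobenius_def]
  exact x.isPrime.pow_mem_iff_mem _ (pow_pos (Fact.out (p := p.Prime)).pos l)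

/-- The `C`-algebra endomorphism of `C[X_1, …, X_n]` sending each variable `X_i` to
`X_i^q`, a model of the inclusion `C[X] ⊆ C[X^{1/q}]`. -/
noncomputable def powerSubstitution (C : Type*) [CommSemiring C] (n q : ℕ) :
    MvPolynomial (Fin n) C →ₐ[C] MvPolynomial (Fin n) C :=
  MvPolynomial.aeval fun i => MvPolynomial.X i ^ q

/-- From the proof of Lemma 3.5 (phomeo) of the paper: the map on prime spectra induced by
`X_i ↦ X_i^{p^l}` on `C[X_1, …, X_n]` is surjective, and is a homeomorphism when
`char C = p`. -/
theorem stmt_6 (C : Type*) [Field C] (n l p : ℕ) (hn : 1 ≤ n) (hp : p.Prime) :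
    Function.Surjective
        (PrimeSpectrum.comap (powerSubstitution C n (p ^ l)).toRingHom) ∧
      (CharP C p →
        IsHomeomorph (PrimeSpectrum.comap (powerSubstitution C n (p ^ l)).toRingHom)) := by
  have hq : 0 < p ^ l := pow_pos hp.pos l
  have hps : powerSubstitution C n (p ^ l) = expand (p ^ l) := ps_eq C n (p ^ l)
  rw [hps]
  constructor
  · exact comap_expand_surjective hq
  · intro hchar
    haveI := Fact.mk hp
    haveI := hchar
    set A := MvPolynomial (Fin n) C with hA
    set φ' : A →+* A := (expand (p ^ l) : A →ₐ[C] A).toRingHom with hφ'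
    set ψ : A →+* A := MvPolynomial.map (iterateFrobenius C p l) with hψ
    have h1 : φ'.comp ψ = iterateFrobenius A p l := RingHom.ext fun f => expand_map_frob (σ := Fin n) (C := C) p l f
    have h2 : ψ.comp φ' = iterateFrobenius A p l := RingHom.ext fun f => map_frob_expand (σ := Fin n) (C := C) p l f
    have key : ∀ (g h : A →+* A), g.comp h = iterateFrobenius A p l →
        ∀ x, PrimeSpectrum.comap h (PrimeSpectrum.comap g x) = x := by
      intro g h hg x
      rw [← PrimeSpectrum.comap_comp_apply, hg, comap_iterFrob]
    have hli : ∀ x, PrimeSpectrum.comap ψ (PrimeSpectrum.comap φ' x) = x := key φ' ψ h1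
    have hri : ∀ x, PrimeSpectrum.comap φ' (PrimeSpectrum.comap ψ x) = x := key ψ φ' h2
    exact Homeomorph.isHomeomorph
      { toFun := PrimeSpectrum.comap φ',
        invFun := PrimeSpectrum.comap ψ,
        left_inv := hli,
        right_inv := hri,
        continuous_toFun := PrimeSpectrum.continuous_comap φ',
        continuous_invFun := PrimeSpectrum.continuous_comap ψ }
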